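/- Suppose there exists a set $A \subseteq [0,1]$ with inner Lebesgue measure $0$ and outer Lebesgue measure $1$. On the product probability space $([0,1]^{\mathbb{N}}, \bigotimes \mathcal{B}([0,1]), \bigotimes \mu)$ with coordinate projections $S_k(\omega) = \omega_k$, define $C(s) = \{0,1\}$ if $s \in A$ and $C(s) = \{0,2\}$ if $s \notin A$. Then for any sequence of (measurable) random variables $(X_k)_{k=1}^{\infty}$ with $X_k(\omega) \in C(S_k(\omega))$ for all $\omega$ and all $k$, we have $X_k = 0$ almost surely for every $k$, and hence $\lim_{k\to\infty} \frac{1}{k}\sum_{i=1}^{k} X_i = 0$ almost surely; whereas the (nonmeasurable) selection $X_k = 1$ if $S_k \in A$ and $X_k = 2$ otherwise satisfies $X_k \ge 1$ everywhere, giving $\liminf_{k\to\infty}\frac{1}{k}\sum_{i=1}^{k}X_i \ge 1$ surely. -/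

import Mathlib

open MeasureTheory
open scoped Classical

private lemma stmt14_key (A : Set unitInterval)
    (hA : ∀ B ⊆ A, MeasurableSet B → (volume : Measure unitInterval) B = 0)
    (P : Measure (ℕ → unitInterval)) [IsProbabilityMeasure P]
    (hP : ∀ (s : Finset ℕ) (B : ℕ → Set unitInterval), (∀ i, MeasurableSet (B i)) →
      P {ω | ∀ i ∈ s, ω i ∈ B i} = ∏ i ∈ s, (volume : Measure unitInterval) (B i))
    (k : ℕ) (E : Set (ℕ → unitInterval)) (hE : MeasurableSet E)
    (hEA : ∀ ω ∈ E, ω k ∈ A) : P E = 0 := by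
  classical
  set g : unitInterval × (ℕ → unitInterval) → ℕ → unitInterval :=
    fun p => Function.update p.2 k p.1 with hg_def
  have hg : Measurable g := by
    apply measurable_pi_lambda
    intro i
    by_cases hik : i = k
    · subst hik
      simpa [hg_def] using (measurable_fst : Measurable fun p : unitInterval × (ℕ → unitInterval) => p.1)
    · simpa [hg_def, Function.update_of_ne hik, Function.comp_def] using
        (measurable_pi_apply i).comp (measurable_snd : Measurable fun p : unitInterval × (ℕ → unitInterval) => p.2)
  have hmap : Measure.map g ((volume : Measure unitInterval).prod P) = P := by
    haveI : IsProbabilityMeasure (Measure.map g ((volume : Measure unitInterval).prod P)) :=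
      Measure.isProbabilityMeasure_map hg.aemeasurable
    refine ext_of_generate_finite _ generateFrom_squareCylinders.symm
      (isPiSystem_squareCylinders (fun i => MeasurableSpace.isPiSystem_measurableSet)
        (fun i => by simp only [Set.mem_setOf_eq]; exact MeasurableSet.univ)) ?_ ?_
    · rintro S ⟨s, t, ht, rfl⟩
      simp only [Set.mem_univ_pi, Set.mem_setOf_eq] at ht
      have hSm : MeasurableSet ((s : Set ℕ).pi t) :=
        MeasurableSet.pi (Finset.countable_toSet s) (fun i _ => ht i)
      have hset : ((s : Set ℕ).pi t) = {ω : ℕ → unitInterval | ∀ i ∈ s, ω i ∈ t i} := by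
        ext ω; simp [Set.mem_pi]
      have hRHS : P ((s : Set ℕ).pi t) = ∏ i ∈ s, (volume : Measure unitInterval) (t i) := by
        rw [hset]; exact hP s t ht
      rw [Measure.map_apply hg hSm, hRHS]
      have hpre : g ⁻¹' ((s : Set ℕ).pi t) =
          (if k ∈ s then t k else Set.univ) ×ˢ
            {ω : ℕ → unitInterval | ∀ i ∈ s.erase k, ω i ∈ t i} := by
        ext ⟨x, ω⟩
        simp only [hg_def, Set.mem_preimage, Set.mem_pi, Finset.mem_coe, Set.mem_prod,
          Set.mem_setOf_eq, Finset.mem_erase, Function.update_apply]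
        constructor
        · intro h
          refine ⟨?_, fun i hi => ?_⟩
          · split_ifs with hk
            · simpa using h k hk
            · trivial
          · simpa [hi.1] using h i hi.2
        · rintro ⟨h1, h2⟩ i hi
          by_cases hik : i = k
          · subst hik
            simp only [if_pos rfl]
            simpa [if_pos hi] using h1
          · simpa [hik] using h2 i ⟨hik, hi⟩
      have herase : P {ω : ℕ → unitInterval | ∀ i ∈ s.erase k, ω i ∈ t i} =
          ∏ i ∈ s.erase k, (volume : Measure unitInterval) (t i) := hP _ t ht
      rw [hpre, Measure.prod_prod, herase]
      by_cases hk : k ∈ s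
      · rw [if_pos hk]
        exact Finset.mul_prod_erase s (fun i => (volume : Measure unitInterval) (t i)) hk
      · rw [if_neg hk, measure_univ, one_mul, Finset.erase_eq_of_notMem hk]
    · simp [measure_univ]
  have h1 : P E = ∫⁻ x, P (Prod.mk x ⁻¹' (g ⁻¹' E)) ∂(volume : Measure unitInterval) := by
    conv_lhs => rw [← hmap]
    rw [Measure.map_apply hg hE, Measure.prod_apply (hg hE)]
  have hf_meas : Measurable fun x => P (Prod.mk x ⁻¹' (g ⁻¹' E)) :=
    measurable_measure_prodMk_left (hg hE)
  have hzero : ∀ x ∉ A, P (Prod.mk x ⁻¹' (g ⁻¹' E)) = 0 := by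
    intro x hx
    have : Prod.mk x ⁻¹' (g ⁻¹' E) = ∅ := by
      ext ω
      simp only [Set.mem_preimage, Set.mem_empty_iff_false, iff_false]
      intro hω
      have := hEA _ hω
      rw [hg_def] at this
      simp only [Function.update_self] at this
      exact hx this
    rw [this, measure_empty]
  rw [h1, lintegral_eq_zero_iff hf_meas, Filter.EventuallyEq, ae_iff]
  simp only [Pi.zero_apply]
  have hsub : {x | ¬ P (Prod.mk x ⁻¹' (g ⁻¹' E)) = (0 : ENNReal)} ⊆ A := by
    intro x hx
    by_contra h
    exact hx (hzero x h)
  have hm : MeasurableSet {x | ¬ P (Prod.mk x ⁻¹' (g ⁻¹' E)) = (0 : ENNReal)} := by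
    have := hf_meas (measurableSet_singleton (0 : ENNReal)).compl
    simpa [Set.preimage, Set.mem_compl_iff] using this
  exact hA _ hsub hm

/-- with a Sierpiński set A (inner measure 0, outer measure 1), every
measurable policy satisfying X_k ∈ C(S_k) has X_k = 0 a.s. (so the averages tend to 0
a.s.), while the nonmeasurable selection gives liminf of the averages ≥ 1 surely. -/
theorem stmt_14 (A : Set unitInterval)
    (hA : ∀ B ⊆ A, MeasurableSet B → (volume : Measure unitInterval) B = 0)
    (hAc : ∀ B ⊆ Aᶜ, MeasurableSet B → (volume : Measure unitInterval) B = 0)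
    (P : Measure (ℕ → unitInterval)) [IsProbabilityMeasure P]
    (hP : ∀ (s : Finset ℕ) (B : ℕ → Set unitInterval), (∀ i, MeasurableSet (B i)) →
      P {ω | ∀ i ∈ s, ω i ∈ B i} = ∏ i ∈ s, (volume : Measure unitInterval) (B i))
    (C : unitInterval → Set ℝ)
    (hCA : ∀ s ∈ A, C s = {0, 1}) (hCAc : ∀ s ∉ A, C s = {0, 2})
    (X : ℕ → (ℕ → unitInterval) → ℝ) (hXmeas : ∀ k, Measurable (X k))
    (hXC : ∀ k ω, X k ω ∈ C (ω k)) :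
    (∀ k, ∀ᵐ ω ∂P, X k ω = 0) ∧
    (∀ᵐ ω ∂P, Filter.Tendsto
      (fun k : ℕ => (k : ℝ)⁻¹ * ∑ i ∈ Finset.range k, X i ω) Filter.atTop (nhds 0)) ∧
    (∀ X' : ℕ → (ℕ → unitInterval) → ℝ,
      (∀ k ω, X' k ω = if ω k ∈ A then 1 else 2) →
      (∀ k ω, X' k ω ∈ C (ω k)) ∧
      ∀ ω, 1 ≤ Filter.liminf
        (fun k : ℕ => (k : ℝ)⁻¹ * ∑ i ∈ Finset.range k, X' i ω) Filter.atTop) := by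
  have hzero : ∀ k, ∀ᵐ ω ∂P, X k ω = 0 := by
    intro k
    have hE1 : P (X k ⁻¹' {1}) = 0 := by
      refine stmt14_key A hA P hP k _ (hXmeas k (measurableSet_singleton 1)) ?_
      intro ω hω
      by_contra h
      have hC := hXC k ω
      rw [hCAc _ h] at hC
      have : X k ω = 1 := hω
      rw [this] at hC
      simp at hC
    have hE2 : P (X k ⁻¹' {2}) = 0 := by
      refine stmt14_key Aᶜ hAc P hP k _ (hXmeas k (measurableSet_singleton 2)) ?_
      intro ω hω
      intro h
      have hC := hXC k ω
      rw [hCA _ h] at hC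
      have : X k ω = 2 := hω
      rw [this] at hC
      simp at hC
    rw [ae_iff]
    refine measure_mono_null (fun ω hω => ?_) (measure_union_null hE1 hE2)
    have hC := hXC k ω
    simp only [Set.mem_setOf_eq] at hω
    by_cases h : ω k ∈ A
    · rw [hCA _ h] at hC
      rcases hC with h0 | h1
      · exact absurd h0 hω
      · exact Or.inl h1
    · rw [hCAc _ h] at hC
      rcases hC with h0 | h2
      · exact absurd h0 hω
      · exact Or.inr h2
  refine ⟨hzero, ?_, ?_⟩
  · have hall : ∀ᵐ ω ∂P, ∀ k, X k ω = 0 := ae_all_iff.2 hzero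
    filter_upwards [hall] with ω hω
    have : (fun k : ℕ => (k : ℝ)⁻¹ * ∑ i ∈ Finset.range k, X i ω) = fun _ => 0 := by
      funext k
      rw [Finset.sum_eq_zero (fun i _ => hω i), mul_zero]
    rw [this]
    exact tendsto_const_nhds
  · intro X' hX'
    constructor
    · intro k ω
      rw [hX' k ω]
      by_cases h : ω k ∈ A
      · rw [if_pos h, hCA _ h]; simp
      · rw [if_neg h, hCAc _ h]; simp
    · intro ω
      have hge : ∀ i, (1 : ℝ) ≤ X' i ω := by
        intro i
        rw [hX' i ω]
        split_ifs <;> norm_num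
      have hle : ∀ i, X' i ω ≤ 2 := by
        intro i
        rw [hX' i ω]
        split_ifs <;> norm_num
      have hboundabove : ∀ k : ℕ, (k : ℝ)⁻¹ * ∑ i ∈ Finset.range k, X' i ω ≤ 2 := by
        intro k
        rcases Nat.eq_zero_or_pos k with hk | hk
        · subst hk; simp
        · have hk' : (0 : ℝ) < k := by exact_mod_cast hk
          have hsum : ∑ i ∈ Finset.range k, X' i ω ≤ (k : ℝ) * 2 := by
            calc ∑ i ∈ Finset.range k, X' i ω ≤ ∑ _i ∈ Finset.range k, (2 : ℝ) :=
                  Finset.sum_le_sum (fun i _ => hle i)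
              _ = (k : ℝ) * 2 := by simp [mul_comm]
          calc (k : ℝ)⁻¹ * ∑ i ∈ Finset.range k, X' i ω
              ≤ (k : ℝ)⁻¹ * ((k : ℝ) * 2) := by
                exact mul_le_mul_of_nonneg_left hsum (by positivity)
            _ = 2 := by field_simp
      have hbdd : Filter.IsBoundedUnder (· ≤ ·) Filter.atTop
          (fun k : ℕ => (k : ℝ)⁻¹ * ∑ i ∈ Finset.range k, X' i ω) :=
        Filter.isBoundedUnder_of ⟨2, hboundabove⟩
      refine Filter.le_liminf_of_le hbdd.isCoboundedUnder_ge ?_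
      rw [Filter.eventually_atTop]
      refine ⟨1, fun k hk => ?_⟩
      have hk' : (0 : ℝ) < k := by exact_mod_cast hk
      have hsum : (k : ℝ) * 1 ≤ ∑ i ∈ Finset.range k, X' i ω := by
        calc (k : ℝ) * 1 = ∑ _i ∈ Finset.range k, (1 : ℝ) := by simp
          _ ≤ ∑ i ∈ Finset.range k, X' i ω := Finset.sum_le_sum (fun i _ => hge i)
      calc (1 : ℝ) = (k : ℝ)⁻¹ * ((k : ℝ) * 1) := by field_simp
        _ ≤ (k : ℝ)⁻¹ * ∑ i ∈ Finset.range k, X' i ω :=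
            mul_le_mul_of_nonneg_left hsum (by positivity)
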